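/- A finite simple graph G has a nontrivial path cover if and only if G has a 2-star partition. -/
import Mathlib


/-- A star partition of `G`. -/
def IsStarPartition {V : Type*} [Fintype V] [DecidableEq V] (G : SimpleGraph V)
    (P : Finset (Finset V)) : Prop :=
  (∀ v : V, ∃! S : Finset V, S ∈ P ∧ v ∈ S) ∧
  (∀ S ∈ P, 2 ≤ S.card) ∧
  (∀ S ∈ P, ∃ c ∈ S, ∀ v ∈ S, v ≠ c → G.Adj c v)

/-- `G` has a nontrivial path cover: a spanning subgraph whose components are paths of
order at least two, i.e. an acyclic spanning subgraph in which every vertex has degree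
`1` or `2`. -/
def HasNontrivialPathCover {V : Type*} [Fintype V] [DecidableEq V]
    (G : SimpleGraph V) : Prop :=
  ∃ H : SimpleGraph V, H ≤ G ∧ H.IsAcyclic ∧
    ∀ v : V, 1 ≤ (H.neighborSet v).ncard ∧ (H.neighborSet v).ncard ≤ 2

section Aux

open SimpleGraph Finset

variable {V : Type*} [Fintype V] [DecidableEq V]

lemma first_edge_mem {H : SimpleGraph V} {u v : V} (p : H.Walk u v) (hp : ¬ p.Nil) :
    s(u, p.getVert 1) ∈ p.edges := by
  cases p with
  | nil => simp at hp
  | cons h q => simp [Walk.getVert_cons_succ]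

lemma first_edge_eq {H : SimpleGraph V} {b z y : V} (q : H.Walk b z) (hq : q.IsPath)
    (he : s(y, b) ∈ q.edges) : y = q.getVert 1 := by
  cases q with
  | nil => simp at he
  | @cons _ w _ h q' =>
    rw [Walk.edges_cons, List.mem_cons] at he
    rcases he with he | he
    · rw [Sym2.eq_iff] at he
      rcases he with ⟨rfl, rfl⟩ | ⟨rfl, -⟩
      · exact absurd rfl h.ne
      · simp [Walk.getVert_cons_succ]
    · exfalso
      have : b ∈ q'.support := Walk.snd_mem_support_of_mem_edges q' he
      rw [Walk.cons_isPath_iff] at hq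
      exact hq.2 this

lemma cycle_start_two_nbrs {H : SimpleGraph V} {y : V} {q : H.Walk y y} (hq : q.IsCycle) :
    ∃ a b, a ≠ b ∧ H.Adj y a ∧ H.Adj y b := by
  have hn : ¬ q.Nil := hq.not_nil
  have h3 : 3 ≤ q.length := hq.three_le_length
  have hcons := q.cons_tail_eq hn
  have hq' : (Walk.cons (q.adj_snd hn) q.tail).IsCycle := by rw [hcons]; exact hq
  rw [Walk.cons_isCycle_iff] at hq'
  have hlt : q.tail.length + 1 = q.length := q.length_tail_add_one hn
  have htn : ¬ q.tail.Nil := by rw [Walk.nil_iff_length_eq]; omega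
  have hrn : ¬ q.tail.reverse.Nil := by
    rw [Walk.nil_iff_length_eq, Walk.length_reverse]
    rw [Walk.nil_iff_length_eq] at htn; exact htn
  refine ⟨q.getVert 1, q.tail.reverse.getVert 1, ?_, q.adj_snd hn,
    q.tail.reverse.adj_snd hrn⟩
  intro hEq
  apply hq'.2
  have hmem := first_edge_mem q.tail.reverse hrn
  rw [Walk.edges_reverse, List.mem_reverse] at hmem
  convert hmem using 3

lemma leaf_exists {H : SimpleGraph V} [DecidableRel H.Adj] (hac : H.IsAcyclic) (s : Finset V)
    (hdeg : ∀ x ∈ s, 1 ≤ (s.filter (H.Adj x)).card ∧ (s.filter (H.Adj x)).card ≤ 2)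
    (hs : s.Nonempty) :
    ∃ b v, b ∈ s ∧ v ∈ s ∧ H.Adj b v ∧ s.filter (H.Adj b) = {v} := by
  obtain ⟨u, hu⟩ := hs
  obtain ⟨y, hy⟩ := Finset.card_pos.mp (lt_of_lt_of_le Nat.zero_lt_one (hdeg u hu).1)
  rw [Finset.mem_filter] at hy
  set L : Set ℕ := {n | ∃ (a b : V) (p : H.Walk a b), p.IsPath ∧ (∀ x ∈ p.support, x ∈ s) ∧
    p.length = n} with hL
  have h1L : 1 ∈ L := by
    refine ⟨u, y, Walk.cons hy.2 Walk.nil, ?_, ?_, rfl⟩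
    · rw [Walk.cons_isPath_iff]
      exact ⟨Walk.IsPath.nil, by simp [hy.2.ne]⟩
    · intro x hx
      simp only [Walk.support_cons, Walk.support_nil, List.mem_cons, List.mem_singleton] at hx
      rcases hx with rfl | rfl | h
      · exact hu
      · exact hy.1
      · simp at h
  have hbdd : BddAbove L := by
    refine ⟨Fintype.card V, ?_⟩
    rintro n ⟨a, b, p, hp, -, rfl⟩
    exact le_of_lt hp.length_lt
  obtain ⟨a, b, p, hp, hsup, hlen⟩ := Nat.sSup_mem ⟨1, h1L⟩ hbdd
  have hmax : ∀ m ∈ L, m ≤ p.length := by rw [hlen]; exact fun m hm => le_csSup hbdd hm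
  have hN1 : 1 ≤ p.length := by rw [hlen]; exact le_csSup hbdd h1L
  have hbs : b ∈ s := hsup b p.end_mem_support
  have hrn : ¬ p.reverse.Nil := by
    rw [Walk.nil_iff_length_eq, Walk.length_reverse]; omega
  set r := p.reverse with hr
  have hadj : H.Adj b (r.getVert 1) := r.adj_snd hrn
  have hrsup : ∀ x ∈ r.support, x ∈ s := by
    intro x hx
    rw [hr, Walk.support_reverse, List.mem_reverse] at hx
    exact hsup x hx
  have hvs : r.getVert 1 ∈ s :=
    hrsup _ (Walk.snd_mem_support_of_mem_edges r (first_edge_mem r hrn))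
  refine ⟨b, r.getVert 1, hbs, hvs, hadj, ?_⟩
  rw [Finset.eq_singleton_iff_unique_mem]
  refine ⟨Finset.mem_filter.mpr ⟨hvs, hadj⟩, ?_⟩
  intro z hz
  rw [Finset.mem_filter] at hz
  obtain ⟨hzs, hbz⟩ := hz
  by_cases hmem : z ∈ r.support
  · by_cases hedge : s(z, b) ∈ r.edges
    · exact first_edge_eq r hp.reverse hedge
    · exfalso
      refine hac (Walk.cons hbz.symm (r.takeUntil z hmem)) ?_
      rw [Walk.cons_isCycle_iff]
      exact ⟨hp.reverse.takeUntil hmem,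
        fun hc => hedge (Walk.edges_takeUntil_subset r hmem hc)⟩
  · exfalso
    have hp2 : (Walk.cons hbz.symm r).IsPath := by
      rw [Walk.cons_isPath_iff]
      exact ⟨hp.reverse, hmem⟩
    have : (Walk.cons hbz.symm r).length ∈ L := by
      refine ⟨z, a, _, hp2, ?_, rfl⟩
      intro x hx
      rw [Walk.support_cons, List.mem_cons] at hx
      rcases hx with rfl | hx
      · exact hzs
      · exact hrsup x hx
    have := hmax _ this
    rw [Walk.length_cons, Walk.length_reverse] at this
    omega

lemma key_lemma (G H : SimpleGraph V) [DecidableRel H.Adj] (hle : H ≤ G) (hac : H.IsAcyclic) :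
    ∀ (n : ℕ) (s : Finset V), s.card ≤ n →
      (∀ x ∈ s, 1 ≤ (s.filter (H.Adj x)).card ∧ (s.filter (H.Adj x)).card ≤ 2) →
      ∃ P : Finset (Finset V),
        (∀ S ∈ P, S ⊆ s ∧ 2 ≤ S.card ∧ S.card ≤ 3 ∧ ∃ c ∈ S, ∀ y ∈ S, y ≠ c → G.Adj c y) ∧
        (∀ x ∈ s, ∃! S : Finset V, S ∈ P ∧ x ∈ S) := by
  intro n
  induction n with
  | zero =>
    intro s hcard _
    rw [Nat.le_zero, Finset.card_eq_zero] at hcard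
    subst hcard
    exact ⟨∅, by simp, by simp⟩
  | succ n ih =>
    intro s hcard hdeg
    rcases s.eq_empty_or_nonempty with rfl | hne
    · exact ⟨∅, by simp, by simp⟩
    obtain ⟨b, v, hbs, hvs, hadj, hNb⟩ := leaf_exists hac s hdeg hne
    have hbv : b ≠ v := hadj.ne
    have hbNv : b ∈ s.filter (H.Adj v) := Finset.mem_filter.mpr ⟨hbs, hadj.symm⟩
    -- a generic combination step
    have combine : ∀ T : Finset V, T ⊆ s → b ∈ T → 2 ≤ T.card → T.card ≤ 3 →
        (∃ c ∈ T, ∀ y ∈ T, y ≠ c → G.Adj c y) →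
        (∀ x ∈ s \ T, 1 ≤ ((s \ T).filter (H.Adj x)).card ∧
          ((s \ T).filter (H.Adj x)).card ≤ 2) →
        ∃ P : Finset (Finset V),
          (∀ S ∈ P, S ⊆ s ∧ 2 ≤ S.card ∧ S.card ≤ 3 ∧ ∃ c ∈ S, ∀ y ∈ S, y ≠ c → G.Adj c y) ∧
          (∀ x ∈ s, ∃! S : Finset V, S ∈ P ∧ x ∈ S) := by
      intro T hTs hbT hT2 hT3 hTstar hinv
      have hlt : (s \ T).card < s.card := by
        apply Finset.card_lt_card
        exact Finset.sdiff_ssubset hTs ⟨b, hbT⟩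
      obtain ⟨P, hP1, hP2⟩ := ih (s \ T) (by omega) hinv
      refine ⟨insert T P, ?_, ?_⟩
      · intro S hS
        rcases Finset.mem_insert.mp hS with rfl | hS
        · exact ⟨hTs, hT2, hT3, hTstar⟩
        · obtain ⟨hsub, h2, h3, hstar⟩ := hP1 S hS
          exact ⟨hsub.trans (Finset.sdiff_subset), h2, h3, hstar⟩
      · intro x hxs
        by_cases hxT : x ∈ T
        · refine ⟨T, ⟨Finset.mem_insert_self _ _, hxT⟩, ?_⟩
          rintro S ⟨hS, hxS⟩
          rcases Finset.mem_insert.mp hS with rfl | hS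
          · rfl
          · exact absurd (((hP1 S hS).1) hxS) (by simp [hxT])
        · obtain ⟨S, ⟨hSP, hxS⟩, huniq⟩ := hP2 x (Finset.mem_sdiff.mpr ⟨hxs, hxT⟩)
          refine ⟨S, ⟨Finset.mem_insert_of_mem hSP, hxS⟩, ?_⟩
          rintro S' ⟨hS', hxS'⟩
          rcases Finset.mem_insert.mp hS' with rfl | hS'
          · exact absurd hxS' hxT
          · exact huniq S' ⟨hS', hxS'⟩
    -- case analysis on the degree of v
    obtain ⟨hdv1, hdv2⟩ := hdeg v hvs
    interval_cases hd : (s.filter (H.Adj v)).card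
    · -- deg v = 1 : part {b, v}
      have hNv : s.filter (H.Adj v) = {b} := by
        obtain ⟨z, hz⟩ := Finset.card_eq_one.mp hd
        rw [hz] at hbNv ⊢
        rw [Finset.mem_singleton] at hbNv
        rw [hbNv]
      refine combine {b, v} ?_ (by simp) ?_ ?_ ⟨v, by simp, ?_⟩ ?_
      · intro z hz
        rcases Finset.mem_insert.mp hz with rfl | hz
        · exact hbs
        · rw [Finset.mem_singleton] at hz; subst hz; exact hvs
      · rw [Finset.card_insert_of_notMem (by simp [hbv]), Finset.card_singleton]
      · rw [Finset.card_insert_of_notMem (by simp [hbv]), Finset.card_singleton]; omega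
      · intro z hz hzv
        rcases Finset.mem_insert.mp hz with rfl | hz
        · exact hle hadj.symm
        · rw [Finset.mem_singleton] at hz; exact absurd hz hzv
      · intro x hx
        obtain ⟨hxs, hxT⟩ := Finset.mem_sdiff.mp hx
        have : (s \ {b, v}).filter (H.Adj x) = s.filter (H.Adj x) := by
          ext z
          simp only [Finset.mem_filter, Finset.mem_sdiff, Finset.mem_insert,
            Finset.mem_singleton]
          constructor
          · rintro ⟨⟨h1, -⟩, h2⟩; exact ⟨h1, h2⟩
          · rintro ⟨h1, h2⟩
            refine ⟨⟨h1, ?_⟩, h2⟩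
            rintro (rfl | rfl)
            · have : x ∈ s.filter (H.Adj z) := Finset.mem_filter.mpr ⟨hxs, h2.symm⟩
              rw [hNb, Finset.mem_singleton] at this
              exact hxT (by simp [this])
            · have : x ∈ s.filter (H.Adj z) := Finset.mem_filter.mpr ⟨hxs, h2.symm⟩
              rw [hNv, Finset.mem_singleton] at this
              exact hxT (by simp [this])
        rw [this]
        exact hdeg x hxs
    · -- deg v = 2 : get the other neighbor w
      have hw : ∃ w, w ≠ b ∧ s.filter (H.Adj v) = {b, w} := by
        obtain ⟨x₁, x₂, hx12, hNv⟩ := Finset.card_eq_two.mp hd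
        rw [hNv] at hbNv
        rcases Finset.mem_insert.mp hbNv with rfl | hb2
        · exact ⟨x₂, hx12.symm, hNv⟩
        · rw [Finset.mem_singleton] at hb2; subst hb2
          exact ⟨x₁, hx12, by rw [hNv, Finset.pair_comm]⟩
      obtain ⟨w, hwb, hNv⟩ := hw
      have hwmem : w ∈ s.filter (H.Adj v) := by rw [hNv]; simp
      rw [Finset.mem_filter] at hwmem
      obtain ⟨hws, hvw⟩ := hwmem
      have hwv : w ≠ v := hvw.ne'
      have hvNw : v ∈ s.filter (H.Adj w) := Finset.mem_filter.mpr ⟨hvs, hvw.symm⟩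
      obtain ⟨hdw1, hdw2b⟩ := hdeg w hws
      interval_cases hdw2 : (s.filter (H.Adj w)).card
      · -- deg w = 1 : part {b, v, w}
        have hNw : s.filter (H.Adj w) = {v} := by
          obtain ⟨z, hz⟩ := Finset.card_eq_one.mp hdw2
          rw [hz] at hvNw ⊢
          rw [Finset.mem_singleton] at hvNw
          rw [hvNw]
        refine combine {b, v, w} ?_ (by simp) ?_ ?_ ⟨v, by simp, ?_⟩ ?_
        · intro z hz
          simp only [Finset.mem_insert, Finset.mem_singleton] at hz
          rcases hz with rfl | rfl | rfl
          · exact hbs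
          · exact hvs
          · exact hws
        · rw [Finset.card_insert_of_notMem (by simp [hbv, hwb.symm]),
            Finset.card_insert_of_notMem (by simp [hwv.symm]), Finset.card_singleton]
          omega
        · rw [Finset.card_insert_of_notMem (by simp [hbv, hwb.symm]),
            Finset.card_insert_of_notMem (by simp [hwv.symm]), Finset.card_singleton]
        · intro z hz hzv
          simp only [Finset.mem_insert, Finset.mem_singleton] at hz
          rcases hz with rfl | rfl | rfl
          · exact hle hadj.symm
          · exact absurd rfl hzv
          · exact hle hvw
        · intro x hx
          obtain ⟨hxs, hxT⟩ := Finset.mem_sdiff.mp hx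
          have : (s \ {b, v, w}).filter (H.Adj x) = s.filter (H.Adj x) := by
            ext z
            simp only [Finset.mem_filter, Finset.mem_sdiff, Finset.mem_insert,
              Finset.mem_singleton]
            constructor
            · rintro ⟨⟨h1, -⟩, h2⟩; exact ⟨h1, h2⟩
            · rintro ⟨h1, h2⟩
              refine ⟨⟨h1, ?_⟩, h2⟩
              rintro (rfl | rfl | rfl)
              · have : x ∈ s.filter (H.Adj z) := Finset.mem_filter.mpr ⟨hxs, h2.symm⟩
                rw [hNb, Finset.mem_singleton] at this
                exact hxT (by simp [this])
              · have : x ∈ s.filter (H.Adj z) := Finset.mem_filter.mpr ⟨hxs, h2.symm⟩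
                rw [hNv] at this
                simp only [Finset.mem_insert, Finset.mem_singleton] at this
                rcases this with rfl | rfl
                · exact hxT (by simp)
                · exact hxT (by simp)
              · have : x ∈ s.filter (H.Adj z) := Finset.mem_filter.mpr ⟨hxs, h2.symm⟩
                rw [hNw, Finset.mem_singleton] at this
                exact hxT (by simp [this])
          rw [this]
          exact hdeg x hxs
      · -- deg w = 2 : part {b, v}, w drops to degree 1
        refine combine {b, v} ?_ (by simp) ?_ ?_ ⟨v, by simp, ?_⟩ ?_
        · intro z hz
          rcases Finset.mem_insert.mp hz with rfl | hz
          · exact hbs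
          · rw [Finset.mem_singleton] at hz; subst hz; exact hvs
        · rw [Finset.card_insert_of_notMem (by simp [hbv]), Finset.card_singleton]
        · rw [Finset.card_insert_of_notMem (by simp [hbv]), Finset.card_singleton]; omega
        · intro z hz hzv
          rcases Finset.mem_insert.mp hz with rfl | hz
          · exact hle hadj.symm
          · rw [Finset.mem_singleton] at hz; exact absurd hz hzv
        · intro x hx
          obtain ⟨hxs, hxT⟩ := Finset.mem_sdiff.mp hx
          simp only [Finset.mem_insert, Finset.mem_singleton, not_or] at hxT
          obtain ⟨hxb, hxv⟩ := hxT
          by_cases hxw : x = w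
          · subst hxw
            have heq : (s \ {b, v}).filter (H.Adj x) = (s.filter (H.Adj x)).erase v := by
              ext z
              simp only [Finset.mem_filter, Finset.mem_sdiff, Finset.mem_insert,
                Finset.mem_singleton, Finset.mem_erase, not_or]
              constructor
              · rintro ⟨⟨h1, h2, h3⟩, h4⟩
                exact ⟨h3, h1, h4⟩
              · rintro ⟨h3, h1, h4⟩
                refine ⟨⟨h1, ?_, h3⟩, h4⟩
                rintro rfl
                have : x ∈ s.filter (H.Adj z) := Finset.mem_filter.mpr ⟨hxs, h4.symm⟩
                rw [hNb, Finset.mem_singleton] at this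
                exact hxv this
            rw [heq, Finset.card_erase_of_mem (Finset.mem_filter.mpr ⟨hvs, hvw.symm⟩), hdw2]
            omega
          · have : (s \ {b, v}).filter (H.Adj x) = s.filter (H.Adj x) := by
              ext z
              simp only [Finset.mem_filter, Finset.mem_sdiff, Finset.mem_insert,
                Finset.mem_singleton]
              constructor
              · rintro ⟨⟨h1, -⟩, h2⟩; exact ⟨h1, h2⟩
              · rintro ⟨h1, h2⟩
                refine ⟨⟨h1, ?_⟩, h2⟩
                rintro (rfl | rfl)
                · have : x ∈ s.filter (H.Adj z) := Finset.mem_filter.mpr ⟨hxs, h2.symm⟩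
                  rw [hNb, Finset.mem_singleton] at this
                  exact hxv this
                · have : x ∈ s.filter (H.Adj z) := Finset.mem_filter.mpr ⟨hxs, h2.symm⟩
                  rw [hNv] at this
                  simp only [Finset.mem_insert, Finset.mem_singleton] at this
                  rcases this with rfl | rfl
                  · exact hxb rfl
                  · exact hxw rfl
            rw [this]
            exact hdeg x hxs

lemma backward (G : SimpleGraph V) (P : Finset (Finset V)) (hSP : IsStarPartition G P)
    (h3 : ∀ S ∈ P, S.card ≤ 2 + 1) : HasNontrivialPathCover G := by
  classical
  obtain ⟨hPart, hCard2, hStar⟩ := hSP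
  choose c hcmem hcadj using hStar
  set r : V → V → Prop := fun x y =>
    ∃ S, ∃ hS : S ∈ P, x ∈ S ∧ y ∈ S ∧ x = c S hS ∧ y ≠ c S hS with hr
  set H := SimpleGraph.fromRel r with hH
  have huniq : ∀ (v : V) (S : Finset V), S ∈ P → v ∈ S → ∀ S' ∈ P, v ∈ S' → S' = S :=
    fun v S hS hv S' hS' hv' => (hPart v).unique ⟨hS', hv'⟩ ⟨hS, hv⟩
  have hnbr : ∀ (S : Finset V) (hS : S ∈ P), ∀ v ∈ S,
      (v = c S hS → H.neighborSet v = ↑(S.erase v)) ∧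
      (v ≠ c S hS → H.neighborSet v = {c S hS}) := by
    intro S hS v hv
    constructor
    · intro hvc
      ext z
      simp only [SimpleGraph.mem_neighborSet, hH, SimpleGraph.fromRel_adj, Finset.coe_erase,
        Set.mem_diff, Finset.mem_coe, Set.mem_singleton_iff]
      constructor
      · rintro ⟨hne, h | h⟩
        · obtain ⟨S', hS', hvS', hzS', hvc', hzc'⟩ := h
          have hss : S' = S := huniq v S hS hv S' hS' hvS'
          subst hss
          exact ⟨hzS', Ne.symm hne⟩
        · obtain ⟨S', hS', hzS', hvS', hzc', hvc'⟩ := h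
          have hss : S' = S := huniq v S hS hv S' hS' hvS'
          subst hss
          exact absurd hvc hvc'
      · rintro ⟨hzS, hzv⟩
        exact ⟨Ne.symm hzv, Or.inl ⟨S, hS, hv, hzS, hvc, fun h => hzv (h.trans hvc.symm)⟩⟩
    · intro hvc
      ext z
      simp only [SimpleGraph.mem_neighborSet, hH, SimpleGraph.fromRel_adj,
        Set.mem_singleton_iff]
      constructor
      · rintro ⟨hne, h | h⟩
        · obtain ⟨S', hS', hvS', hzS', hvc', hzc'⟩ := h
          have hss : S' = S := huniq v S hS hv S' hS' hvS'
          subst hss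
          exact absurd hvc' hvc
        · obtain ⟨S', hS', hzS', hvS', hzc', hvc'⟩ := h
          have hss : S' = S := huniq v S hS hv S' hS' hvS'
          subst hss
          exact hzc'
      · rintro rfl
        exact ⟨hvc, Or.inr ⟨S, hS, hcmem S hS, hv, rfl, hvc⟩⟩
  refine ⟨H, ?_, ?_, ?_⟩
  · -- H ≤ G
    rintro x y hxy
    rw [hH, SimpleGraph.fromRel_adj] at hxy
    obtain ⟨hne, h | h⟩ := hxy
    · obtain ⟨S, hS, hxS, hyS, hxc, hyc⟩ := h
      subst hxc
      exact hcadj S hS y hyS hyc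
    · obtain ⟨S, hS, hyS, hxS, hyc, hxc⟩ := h
      subst hyc
      exact (hcadj S hS x hxS hxc).symm
  · -- acyclic
    intro v0 p hcyc
    have hn : ¬ p.Nil := hcyc.not_nil
    have hadj : H.Adj v0 (p.getVert 1) := p.adj_snd hn
    -- one endpoint of this edge is a non-center; call it y
    have hnc : ∃ y ∈ p.support, ∃ (S : Finset V) (hS : S ∈ P), y ∈ S ∧ y ≠ c S hS := by
      obtain ⟨hne, h | h⟩ := (SimpleGraph.fromRel_adj r v0 (p.getVert 1)).mp hadj
      · obtain ⟨S, hS, h1, h2, h3, h4⟩ := h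
        exact ⟨p.getVert 1, Walk.snd_mem_support_of_mem_edges p (first_edge_mem p hn),
          S, hS, h2, h4⟩
      · obtain ⟨S, hS, h1, h2, h3, h4⟩ := h
        exact ⟨v0, p.start_mem_support, S, hS, h2, h4⟩
    obtain ⟨y, hysup, S, hS, hyS, hyc⟩ := hnc
    obtain ⟨a, b, hab, hya, hyb⟩ := cycle_start_two_nbrs (hcyc.rotate hysup)
    have hy1 := ((hnbr S hS y hyS).2 hyc)
    have ha : a ∈ H.neighborSet y := hya
    have hb : b ∈ H.neighborSet y := hyb
    rw [hy1, Set.mem_singleton_iff] at ha hb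
    exact hab (ha.trans hb.symm)
  · -- degrees
    intro v
    obtain ⟨S, ⟨hS, hvS⟩, -⟩ := hPart v
    by_cases hvc : v = c S hS
    · rw [(hnbr S hS v hvS).1 hvc, Set.ncard_coe_finset,
        Finset.card_erase_of_mem hvS]
      have h2 := hCard2 S hS
      have h3' := h3 S hS
      omega
    · rw [(hnbr S hS v hvS).2 hvc, Set.ncard_singleton]
      omega

end Aux

/-- A finite simple graph has a nontrivial path cover iff it has a
`2`-star partition (every part has at most `3` vertices). -/
theorem stmt15 {V : Type*} [Fintype V] [DecidableEq V] (G : SimpleGraph V) :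
    HasNontrivialPathCover G ↔
      ∃ P : Finset (Finset V), IsStarPartition G P ∧ ∀ S ∈ P, S.card ≤ 2 + 1 := by
  classical
  constructor
  · rintro ⟨H, hle, hac, hdeg⟩
    haveI : DecidableRel H.Adj := Classical.decRel _
    have hfilter : ∀ x : V, (Finset.univ.filter (H.Adj x)).card = (H.neighborSet x).ncard := by
      intro x
      rw [← Set.ncard_coe_finset]
      congr 1
      ext y
      simp [SimpleGraph.mem_neighborSet]
    obtain ⟨P, hP1, hP2⟩ := key_lemma G H hle hac Finset.univ.card Finset.univ le_rfl
      (by intro x _; rw [hfilter x]; exact hdeg x)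
    exact ⟨P, ⟨fun v => hP2 v (Finset.mem_univ v), fun S hS => (hP1 S hS).2.1,
      fun S hS => (hP1 S hS).2.2.2⟩, fun S hS => (hP1 S hS).2.2.1⟩
  · rintro ⟨P, hSP, h3⟩
    exact backward G P hSP h3
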